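/- Let K be a self-similar compact set of module μ and ratio ρ. Then the derived set K' is also a self-similar compact set of module μ and ratio ρ, i.e., K' is compact, well-ordered by the reverse order with order type ω^ω + 1, and ρ·(K')^(μ) = K'. -/

import Mathlib

open Ordinal Filter Topology Set

/-- The `n`-th derived set of `A ⊆ ℝ`. -/
noncomputable def iterDeriv (A : Set ℝ) (n : ℕ) : Set ℝ := (derivedSet (X := ℝ))^[n] A

/-- The ordinal `ω ^ ω`. -/
noncomputable def wOmega : Ordinal.{0} := Ordinal.omega0 ^ Ordinal.omega0

/-- An enumeration of `K ⊆ ℝ` witnessing that `K`, with the reverse of the usual order,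
is well-ordered with order type `ω ^ ω + 1`: its elements are exactly `e α` for
`α ≤ ω ^ ω`, and the enumeration is strictly order-reversing. `e α` is the element
written `K[α]`. -/
structure OrdEnum (K : Set ℝ) where
  e : Ordinal.{0} → ℝ
  mem : ∀ α ≤ wOmega, e α ∈ K
  surj : ∀ x ∈ K, ∃ α ≤ wOmega, e α = x
  anti : ∀ ⦃α β : Ordinal.{0}⦄, α ≤ wOmega → β ≤ wOmega → (α < β ↔ e β < e α)

/-- An enumeration of a set `S ⊆ ℝ` of reverse-order type `ω ^ ω` (indices `α < ω ^ ω`),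
strictly order-reversing; `e α` is the element written `S[α]`. -/
structure SubEnum (S : Set ℝ) where
  e : Ordinal.{0} → ℝ
  mem : ∀ α < wOmega, e α ∈ S
  surj : ∀ x ∈ S, ∃ α < wOmega, e α = x
  anti : ∀ ⦃α β : Ordinal.{0}⦄, α < wOmega → β < wOmega → (α < β ↔ e β < e α)

/-- A self-similar compact set of ratio `ρ > 1` and module `μ ≥ 1`:
a compact `K ⊆ [0, ∞)`, well-ordered by the reverse usual order with order
type `ω ^ ω + 1`, satisfying `ρ • K^(μ) = K`. -/
def SelfSimilar (K : Set ℝ) (ρ : ℝ) (μ : ℕ) : Prop :=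
  IsCompact K ∧ K ⊆ Set.Ici 0 ∧ 1 < ρ ∧ 1 ≤ μ ∧
    (fun x => ρ * x) '' iterDeriv K μ = K ∧ Nonempty (OrdEnum K)

/-! ### Auxiliary lemmas -/

lemma Homeomorph.image_derivedSet' {X Y : Type*} [TopologicalSpace X] [TopologicalSpace Y]
    (g : X ≃ₜ Y) (A : Set X) : g '' derivedSet A = derivedSet (g '' A) := by
  refine subset_antisymm (g.continuous.image_derivedSet g.injective) ?_
  intro x hx
  have h2 : g.symm '' derivedSet (g '' A) ⊆ derivedSet (g.symm '' (g '' A)) :=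
    g.symm.continuous.image_derivedSet g.symm.injective
  have hm : g.symm x ∈ derivedSet A := by
    have := h2 ⟨x, hx, rfl⟩
    rwa [← Set.image_comp, g.symm_comp_self, Set.image_id] at this
  exact ⟨g.symm x, hm, g.apply_symm_apply x⟩

lemma omega0_mul_wOmega : Ordinal.omega0 * wOmega = wOmega := by
  conv_lhs => rw [← Ordinal.opow_one Ordinal.omega0]
  rw [wOmega, ← Ordinal.opow_add, Ordinal.one_add_omega0]

lemma wOmega_isLimit : Order.IsSuccLimit wOmega := by
  rw [Ordinal.isSuccLimit_iff_omega0_dvd]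
  refine ⟨?_, ⟨wOmega, omega0_mul_wOmega.symm⟩⟩
  rw [wOmega]
  exact (Ordinal.opow_pos _ Ordinal.omega0_pos).ne'

lemma omega0_le_wOmega : Ordinal.omega0 ≤ wOmega := by
  conv_lhs => rw [← Ordinal.opow_one Ordinal.omega0]
  exact Ordinal.opow_le_opow_right Ordinal.omega0_pos Ordinal.one_lt_omega0.le

/-- The map `α ↦ ω * (1 + α)` enumerating limit ordinals. -/
noncomputable def phiL (α : Ordinal.{0}) : Ordinal.{0} := Ordinal.omega0 * (1 + α)

lemma phiL_strictMono : StrictMono phiL := fun α β h => by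
  unfold phiL
  rw [mul_lt_mul_iff_right₀ Ordinal.omega0_pos]
  exact add_lt_add_right h 1

lemma phiL_wOmega : phiL wOmega = wOmega := by
  unfold phiL
  rw [Ordinal.one_add_of_omega0_le omega0_le_wOmega, omega0_mul_wOmega]

lemma phiL_le_iff {α : Ordinal.{0}} : phiL α ≤ wOmega ↔ α ≤ wOmega := by
  conv_lhs => rw [← phiL_wOmega]
  exact phiL_strictMono.le_iff_le

lemma phiL_isLimit (α : Ordinal.{0}) : Order.IsSuccLimit (phiL α) := by
  rw [Ordinal.isSuccLimit_iff_omega0_dvd]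
  refine ⟨?_, ⟨1 + α, rfl⟩⟩
  unfold phiL
  exact (mul_pos Ordinal.omega0_pos
    (lt_of_lt_of_le zero_lt_one (le_self_add (a := (1 : Ordinal.{0})) (b := α)))).ne'

section Enum

variable {K : Set ℝ} (E : OrdEnum K)

/-- No element of `K` lies strictly between consecutive enumeration values. -/
lemma OrdEnum.gap {β : Ordinal.{0}} (hβ : β + 1 ≤ wOmega) {x : ℝ} (hx : x ∈ K) :
    ¬ (E.e (β + 1) < x ∧ x < E.e β) := by
  rintro ⟨h1, h2⟩
  obtain ⟨γ, hγ, rfl⟩ := E.surj x hx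
  have hβ' : β ≤ wOmega := le_of_lt (lt_of_lt_of_le (lt_add_one β) hβ)
  have hlt1 : β < γ := (E.anti hβ' hγ).2 h2
  have hlt2 : γ < β + 1 := (E.anti hγ hβ).2 h1
  rw [Ordinal.add_one_eq_succ, Order.lt_succ_iff] at hlt2
  exact absurd hlt1 (not_lt_of_ge hlt2)

lemma OrdEnum.mem_derivedSet_of_limit (hK : IsClosed K) {α : Ordinal.{0}}
    (hlim : Order.IsSuccLimit α) (hα : α ≤ wOmega) : E.e α ∈ derivedSet K := by
  rw [mem_derivedSet, accPt_iff_nhds]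
  intro U hU
  obtain ⟨ε, hε, hball⟩ := Metric.mem_nhds_iff.1 hU
  -- claim: there is β < α with E.e β < E.e α + ε
  have key : ∃ β < α, E.e β < E.e α + ε := by
    by_contra hcon
    push_neg at hcon
    set S : Set ℝ := E.e '' Set.Iio α with hS
    have hSne : S.Nonempty := ⟨E.e 0, 0, hlim.pos, rfl⟩
    have hSbdd : BddBelow S := by
      refine ⟨E.e α + ε, ?_⟩
      rintro y ⟨β, hβ, rfl⟩
      exact hcon β hβ
    have hsub : S ⊆ K := by
      rintro y ⟨β, hβ, rfl⟩
      exact E.mem β (le_trans (le_of_lt hβ) hα)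
    have hinfK : sInf S ∈ K := by
      have h1 : sInf S ∈ closure S := csInf_mem_closure hSne hSbdd
      have h2 : closure S ⊆ closure K := closure_mono hsub
      exact hK.closure_subset (h2 h1)
    obtain ⟨γ, hγ, hγeq⟩ := E.surj _ hinfK
    have hge : E.e α + ε ≤ sInf S := le_csInf hSne (by rintro y ⟨β, hβ, rfl⟩; exact hcon β hβ)
    have hγα : γ < α := by
      have : E.e α < E.e γ := by
        rw [hγeq]; exact lt_of_lt_of_le (lt_add_of_pos_right _ hε) hge
      exact (E.anti hγ hα).2 this
    have hsucc : γ + 1 < α := by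
      rw [Ordinal.add_one_eq_succ]
      exact hlim.succ_lt hγα
    have hmemS : E.e (γ + 1) ∈ S := ⟨γ + 1, hsucc, rfl⟩
    have h1 : sInf S ≤ E.e (γ + 1) := csInf_le hSbdd hmemS
    have hγ1 : γ + 1 ≤ wOmega := le_trans (le_of_lt hsucc) hα
    have h2 : E.e (γ + 1) < E.e γ := (E.anti (le_trans (le_of_lt hγα) hα) hγ1).1 (lt_add_one γ)
    rw [hγeq] at h2
    exact absurd (lt_of_le_of_lt h1 h2) (lt_irrefl _)
  obtain ⟨β, hβα, hβε⟩ := key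
  have hβ : β ≤ wOmega := le_trans (le_of_lt hβα) hα
  have hgt : E.e α < E.e β := (E.anti hβ hα).1 hβα
  refine ⟨E.e β, ⟨hball ?_, E.mem β hβ⟩, ne_of_gt hgt⟩
  rw [Metric.mem_ball, Real.dist_eq, abs_of_pos (by linarith)]
  linarith

lemma OrdEnum.not_mem_derivedSet_succ {γ : Ordinal.{0}} (hγ : γ + 1 ≤ wOmega) :
    E.e (γ + 1) ∉ derivedSet K := by
  have hγ1 : γ + 1 < wOmega := by
    rcases lt_or_eq_of_le hγ with h | h
    · exact h
    · exfalso
      have := wOmega_isLimit.isSuccPrelimit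
      rw [Ordinal.add_one_eq_succ] at h
      exact (this γ) (h ▸ Order.covBy_succ γ)
  have hγ2 : γ + 1 + 1 ≤ wOmega := by
    rw [Ordinal.add_one_eq_succ (γ+1)]
    exact (wOmega_isLimit.succ_lt hγ1).le
  intro hmem
  rw [mem_derivedSet, accPt_iff_nhds] at hmem
  have hγ0 : γ ≤ wOmega := le_trans (le_of_lt (lt_add_one γ)) hγ
  have hlt1 : E.e (γ + 1 + 1) < E.e (γ + 1) := (E.anti hγ hγ2).1 (lt_add_one _)
  have hlt2 : E.e (γ + 1) < E.e γ := (E.anti hγ0 hγ).1 (lt_add_one _)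
  obtain ⟨y, ⟨hyU, hyK⟩, hyne⟩ := hmem (Set.Ioo (E.e (γ + 1 + 1)) (E.e γ))
    (Ioo_mem_nhds hlt1 hlt2)
  obtain ⟨δ, hδ, rfl⟩ := E.surj y hyK
  have h1 : δ < γ + 1 + 1 := (E.anti hδ hγ2).2 hyU.1
  have h2 : γ < δ := (E.anti hγ0 hδ).2 hyU.2
  rw [Ordinal.add_one_eq_succ (γ+1), Order.lt_succ_iff] at h1
  have : δ = γ + 1 := le_antisymm h1 (by rw [Ordinal.add_one_eq_succ]; exact Order.succ_le_of_lt h2)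
  exact hyne (by rw [this])

lemma OrdEnum.not_mem_derivedSet_zero : E.e 0 ∉ derivedSet K := by
  have h1w : (1 : Ordinal) ≤ wOmega := (Ordinal.one_lt_of_isSuccLimit wOmega_isLimit).le
  have hlt : E.e 1 < E.e 0 := (E.anti (zero_le (a := wOmega)) h1w).1 zero_lt_one
  intro hmem
  rw [mem_derivedSet, accPt_iff_nhds] at hmem
  obtain ⟨y, ⟨hyU, hyK⟩, hyne⟩ := hmem (Set.Ioo (E.e 1) (E.e 0 + 1))
    (Ioo_mem_nhds hlt (lt_add_one _))
  obtain ⟨δ, hδ, rfl⟩ := E.surj y hyK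
  have h1 : δ < 1 := (E.anti hδ h1w).2 hyU.1
  have : δ = 0 := Ordinal.lt_one_iff_zero.1 h1
  exact hyne (by rw [this])

/-- The derived set of `K` consists exactly of the `E.e α` for limit `α ≤ ω ^ ω`. -/
noncomputable def OrdEnum.deriv (hK : IsClosed K) : OrdEnum (derivedSet K) where
  e := fun α => E.e (phiL α)
  mem := fun α hα =>
    E.mem_derivedSet_of_limit hK (phiL_isLimit α) (phiL_le_iff.2 hα)
  surj := by
    intro x hx
    have hxK : x ∈ K := hK.closure_subset (derivedSet_subset_closure K hx)
    obtain ⟨γ, hγ, rfl⟩ := E.surj x hxK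
    rcases Ordinal.zero_or_succ_or_isSuccLimit γ with rfl | ⟨δ, rfl⟩ | hlim
    · exact absurd hx E.not_mem_derivedSet_zero
    · rw [← Ordinal.add_one_eq_succ] at hγ hx ⊢
      exact absurd hx (E.not_mem_derivedSet_succ hγ)
    · obtain ⟨hne, c, rfl⟩ := Ordinal.isSuccLimit_iff_omega0_dvd.1 hlim
      have hc0 : c ≠ 0 := by rintro rfl; simp at hne
      have hc1 : (1 : Ordinal) ≤ c := Ordinal.one_le_iff_ne_zero.2 hc0
      refine ⟨c - 1, ?_, ?_⟩
      · rw [← phiL_le_iff]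
        show Ordinal.omega0 * (1 + (c - 1)) ≤ wOmega
        rwa [Ordinal.add_sub_cancel_of_le hc1]
      · show E.e (Ordinal.omega0 * (1 + (c - 1))) = _
        rw [Ordinal.add_sub_cancel_of_le hc1]
  anti := by
    intro α β hα hβ
    constructor
    · intro hab
      exact (E.anti (phiL_le_iff.2 hα) (phiL_le_iff.2 hβ)).1 (phiL_strictMono hab)
    · intro hab
      have := (E.anti (phiL_le_iff.2 hα) (phiL_le_iff.2 hβ)).2 hab
      exact phiL_strictMono.lt_iff_lt.1 this

end Enum

theorem selfSimilar_derivedSet (K : Set ℝ) (ρ : ℝ) (μ : ℕ)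
    (h : SelfSimilar K ρ μ) : SelfSimilar (derivedSet K) ρ μ := by
  obtain ⟨hcomp, hpos, hρ, hμ, himg, ⟨E⟩⟩ := h
  have hK : IsClosed K := hcomp.isClosed
  have hsub : derivedSet K ⊆ K := (derivedSet_subset_closure K).trans hK.closure_subset
  have hρ0 : ρ ≠ 0 := by positivity
  set g : ℝ ≃ₜ ℝ := Homeomorph.mulLeft₀ ρ hρ0 with hg
  have hgco : ⇑g = fun x => ρ * x := Homeomorph.coe_mulLeft₀ ρ hρ0
  refine ⟨hcomp.of_isClosed_subset (isClosed_derivedSet K) hsub,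
    hsub.trans hpos, hρ, hμ, ?_, ⟨E.deriv hK⟩⟩
  have hiter : iterDeriv (derivedSet K) μ = derivedSet (iterDeriv K μ) := by
    show (derivedSet (X := ℝ))^[μ] ((derivedSet (X := ℝ)) K) = _
    rw [← Function.iterate_succ_apply, Function.iterate_succ_apply']
    rfl
  rw [hiter, ← hgco, g.image_derivedSet', hgco, himg]
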